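/- Let I be a compact interval of ℝ and let f : I² → ℝ be a C² function. Suppose that for every z ∈ I², the two implications hold: ∂_x f(z) = 0 implies ∂_x² f(z) > 0, and ∂_y f(z) = 0 implies ∂_y² f(z) < 0. Then f satisfies the two-sided PL condition: there exists a constant C < ∞ such that for every (x,y) ∈ I², f(x,y) − inf_{x'∈I} f(x',y) ≤ C|∂_x f(x,y)|² and sup_{y'∈I} f(x,y') − f(x,y) ≤ C|∂_y f(x,y)|². -/

import Mathlib

open Set Filter

lemma slope_sub_eq {f : ℝ → ℝ} {p t : ℝ} (h : t ≠ p) :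
    f t - f p = slope f p t * (t - p) := by
  rw [slope_def_field, div_mul_cancel₀ _ (sub_ne_zero.mpr h)]

lemma exists_slope_pos {l u : ℝ} {f : ℝ → ℝ} {c p : ℝ}
    (hd : HasDerivWithinAt f c (Icc l u) p) (hc : 0 < c)
    {T : Set ℝ} (hT : T ⊆ Icc l u \ {p}) (hcl : p ∈ closure T) :
    ∃ t ∈ T, 0 < slope f p t := by
  have h1 : Tendsto (slope f p) (nhdsWithin p (Icc l u \ {p})) (nhds c) :=
    hasDerivWithinAt_iff_tendsto_slope.mp hd
  have h2 : ∀ᶠ t in nhdsWithin p (Icc l u \ {p}), 0 < slope f p t :=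
    h1.eventually (eventually_gt_nhds hc)
  have hne : (nhdsWithin p T).NeBot := mem_closure_iff_nhdsWithin_neBot.mp hcl
  have h3 : ∀ᶠ t in nhdsWithin p T, 0 < slope f p t :=
    h2.filter_mono (nhdsWithin_mono p hT)
  have h4 : ∀ᶠ t in nhdsWithin p T, t ∈ T := self_mem_nhdsWithin
  obtain ⟨t, ht1, ht2⟩ := (h4.and h3).exists
  exact ⟨t, ht1, ht2⟩

lemma exists_slope_neg {l u : ℝ} {f : ℝ → ℝ} {c p : ℝ}
    (hd : HasDerivWithinAt f c (Icc l u) p) (hc : c < 0)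
    {T : Set ℝ} (hT : T ⊆ Icc l u \ {p}) (hcl : p ∈ closure T) :
    ∃ t ∈ T, slope f p t < 0 := by
  have h1 : Tendsto (slope f p) (nhdsWithin p (Icc l u \ {p})) (nhds c) :=
    hasDerivWithinAt_iff_tendsto_slope.mp hd
  have h2 : ∀ᶠ t in nhdsWithin p (Icc l u \ {p}), slope f p t < 0 :=
    h1.eventually (eventually_lt_nhds hc)
  have hne : (nhdsWithin p T).NeBot := mem_closure_iff_nhdsWithin_neBot.mp hcl
  have h3 : ∀ᶠ t in nhdsWithin p T, slope f p t < 0 :=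
    h2.filter_mono (nhdsWithin_mono p hT)
  have h4 : ∀ᶠ t in nhdsWithin p T, t ∈ T := self_mem_nhdsWithin
  obtain ⟨t, ht1, ht2⟩ := (h4.and h3).exists
  exact ⟨t, ht1, ht2⟩

lemma slope_pos_gt {f : ℝ → ℝ} {p t : ℝ} (h : 0 < slope f p t) (hpt : p < t) : f p < f t := by
  have := slope_sub_eq (f := f) (ne_of_gt hpt)
  nlinarith

lemma slope_pos_lt {f : ℝ → ℝ} {p t : ℝ} (h : 0 < slope f p t) (htp : t < p) : f t < f p := by
  have := slope_sub_eq (f := f) (ne_of_lt htp)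
  nlinarith

lemma slope_neg_lt {f : ℝ → ℝ} {p t : ℝ} (h : slope f p t < 0) (hpt : p < t) : f t < f p := by
  have := slope_sub_eq (f := f) (ne_of_gt hpt)
  nlinarith

lemma key1d {l u ε lam M : ℝ} (hl : l < u) (hε : 0 < ε) (hlam : 0 < lam)
    {g : ℝ → ℝ} (hg : ContDiffOn ℝ 2 g (Icc l u))
    (hM : ∀ t ∈ Icc l u, |g t| ≤ M)
    (hkey : ∀ t ∈ Icc l u, |derivWithin g (Icc l u) t| ≤ ε →
        lam ≤ derivWithin (derivWithin g (Icc l u)) (Icc l u) t)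
    {xh : ℝ} (hxh : xh ∈ Icc l u) (hmin : ∀ t ∈ Icc l u, g xh ≤ g t) :
    ∀ x ∈ Icc l u, g x - g xh ≤
      max (1/(2*lam)) (2*M/ε^2) * (derivWithin g (Icc l u) x)^2 := by
  set v := derivWithin g (Icc l u) with hv_def
  set w := derivWithin v (Icc l u) with hw_def
  have hud : UniqueDiffOn ℝ (Icc l u) := uniqueDiffOn_Icc hl
  have hgd : DifferentiableOn ℝ g (Icc l u) := hg.differentiableOn two_ne_zero
  have hv1 : ContDiffOn ℝ 1 v (Icc l u) := hg.derivWithin hud (by norm_num)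
  have hvd : DifferentiableOn ℝ v (Icc l u) := hv1.differentiableOn one_ne_zero
  have hvc : ContinuousOn v (Icc l u) := hvd.continuousOn
  have hgc : ContinuousOn g (Icc l u) := hg.continuousOn
  have hkey' : ∀ t ∈ Icc l u, |v t| ≤ ε → lam ≤ w t := hkey
  -- derivatives at interior points
  have hderiv_g : ∀ r ∈ Ioo l u, deriv g r = v r := fun r hr =>
    (derivWithin_of_mem_nhds (Icc_mem_nhds hr.1 hr.2)).symm
  have hderiv_v : ∀ r ∈ Ioo l u, deriv v r = w r := fun r hr =>
    (derivWithin_of_mem_nhds (Icc_mem_nhds hr.1 hr.2)).symm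
  have hdiff_g : ∀ r ∈ Ioo l u, DifferentiableAt ℝ g r := fun r hr =>
    (hgd r (Ioo_subset_Icc_self hr)).differentiableAt (Icc_mem_nhds hr.1 hr.2)
  have hdiff_v : ∀ r ∈ Ioo l u, DifferentiableAt ℝ v r := fun r hr =>
    (hvd r (Ioo_subset_Icc_self hr)).differentiableAt (Icc_mem_nhds hr.1 hr.2)
  -- monotone barrier claims
  have mono_up : ∀ s ∈ Icc l u, ∀ t ∈ Icc l u, s < t → ε ≤ v s → ε ≤ v t := by
    intro s hs t ht hst hvs
    by_contra hcon
    push_neg at hcon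
    have hsub : Icc s t ⊆ Icc l u := Icc_subset_Icc hs.1 ht.2
    set E := Icc s t ∩ v ⁻¹' (Ici ε) with hE_def
    have hEclosed : IsClosed E :=
      (hvc.mono hsub).preimage_isClosed_of_isClosed isClosed_Icc isClosed_Ici
    have hEne : E.Nonempty := ⟨s, ⟨le_refl s, hst.le⟩, hvs⟩
    have hEbdd : BddAbove E := (bddAbove_Icc (a := s) (b := t)).mono inter_subset_left
    obtain ⟨c, hcE, hc_def⟩ : ∃ c, c ∈ E ∧ c = sSup E :=
      ⟨sSup E, hEclosed.csSup_mem hEne hEbdd, rfl⟩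
    have hc_mem : c ∈ Icc l u := hsub hcE.1
    have hclt : c < t := lt_of_le_of_ne hcE.1.2 (by
      rintro rfl
      exact absurd hcE.2 (not_le.mpr hcon))
    have hgt : ∀ r ∈ Ioc c t, v r < ε := by
      intro r hr
      by_contra h'
      push_neg at h'
      have hrE : r ∈ E := ⟨⟨le_trans hcE.1.1 hr.1.le, hr.2⟩, h'⟩
      exact absurd (hc_def ▸ le_csSup hEbdd hrE) (not_le.mpr hr.1)
    have hTsub : Ioc c t ⊆ Icc l u \ {c} := by
      intro r hr
      exact ⟨⟨le_trans hc_mem.1 hr.1.le, le_trans hr.2 ht.2⟩, ne_of_gt hr.1⟩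
    have hclT : c ∈ closure (Ioc c t) := by
      rw [closure_Ioc (ne_of_lt hclt)]
      exact ⟨le_refl c, hclt.le⟩
    have hvle : v c ≤ ε := by
      have htend : Tendsto v (nhdsWithin c (Ioc c t)) (nhds (v c)) :=
        (hvc c hc_mem).mono (fun r hr => (hTsub hr).1)
      have hne : (nhdsWithin c (Ioc c t)).NeBot := mem_closure_iff_nhdsWithin_neBot.mp hclT
      exact le_of_tendsto htend
        (by filter_upwards [self_mem_nhdsWithin] with r hr using (hgt r hr).le)
    have hvc_eq : v c = ε := le_antisymm hvle hcE.2
    have hw : lam ≤ w c := hkey' c hc_mem (by rw [hvc_eq, abs_of_pos hε])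
    have hder : HasDerivWithinAt v (w c) (Icc l u) c := (hvd c hc_mem).hasDerivWithinAt
    obtain ⟨r, hr, hslope⟩ := exists_slope_pos hder (lt_of_lt_of_le hlam hw) hTsub hclT
    have : v c < v r := slope_pos_gt hslope hr.1
    exact absurd (hgt r hr) (not_lt.mpr (by rw [← hvc_eq]; exact this.le))
  have mono_down : ∀ s ∈ Icc l u, ∀ t ∈ Icc l u, s < t → v t ≤ -ε → v s ≤ -ε := by
    intro s hs t ht hst hvt
    by_contra hcon
    push_neg at hcon
    have hsub : Icc s t ⊆ Icc l u := Icc_subset_Icc hs.1 ht.2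
    set E := Icc s t ∩ v ⁻¹' (Iic (-ε)) with hE_def
    have hEclosed : IsClosed E :=
      (hvc.mono hsub).preimage_isClosed_of_isClosed isClosed_Icc isClosed_Iic
    have hEne : E.Nonempty := ⟨t, ⟨hst.le, le_refl t⟩, hvt⟩
    have hEbdd : BddBelow E := (bddBelow_Icc : BddBelow (Icc s t)).mono inter_subset_left
    obtain ⟨c, hcE, hc_def⟩ : ∃ c, c ∈ E ∧ c = sInf E :=
      ⟨sInf E, hEclosed.csInf_mem hEne hEbdd, rfl⟩
    have hc_mem : c ∈ Icc l u := hsub hcE.1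
    have hslt : s < c := lt_of_le_of_ne hcE.1.1 (by
      rintro rfl
      exact absurd hcE.2 (not_le.mpr hcon))
    have hgt : ∀ r ∈ Ico s c, -ε < v r := by
      intro r hr
      by_contra h'
      push_neg at h'
      have hrE : r ∈ E := ⟨⟨hr.1, le_trans hr.2.le (hsub hcE.1 |> fun _ => hcE.1.2)⟩, h'⟩
      exact absurd (hc_def ▸ csInf_le hEbdd hrE) (not_le.mpr hr.2)
    have hTsub : Ico s c ⊆ Icc l u \ {c} := by
      intro r hr
      exact ⟨⟨le_trans hs.1 hr.1, le_trans hr.2.le hc_mem.2⟩, ne_of_lt hr.2⟩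
    have hclT : c ∈ closure (Ico s c) := by
      rw [closure_Ico (ne_of_lt hslt)]
      exact ⟨hslt.le, le_refl c⟩
    have hvge : -ε ≤ v c := by
      have htend : Tendsto v (nhdsWithin c (Ico s c)) (nhds (v c)) :=
        (hvc c hc_mem).mono (fun r hr => (hTsub hr).1)
      have hne : (nhdsWithin c (Ico s c)).NeBot := mem_closure_iff_nhdsWithin_neBot.mp hclT
      exact ge_of_tendsto htend
        (by filter_upwards [self_mem_nhdsWithin] with r hr using (hgt r hr).le)
    have hvc_eq : v c = -ε := le_antisymm hcE.2 hvge
    have hw : lam ≤ w c := hkey' c hc_mem (by rw [hvc_eq, abs_neg, abs_of_pos hε])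
    have hder : HasDerivWithinAt v (w c) (Icc l u) c := (hvd c hc_mem).hasDerivWithinAt
    obtain ⟨r, hr, hslope⟩ := exists_slope_pos hder (lt_of_lt_of_le hlam hw) hTsub hclT
    have : v r < v c := slope_pos_lt hslope hr.2
    exact absurd (hgt r hr) (not_lt.mpr (by rw [← hvc_eq]; exact this.le))
  have mono_up' : ∀ s ∈ Icc l u, ∀ t ∈ Icc l u, s < t → ε < v s → ε < v t := by
    intro s hs t ht hst hvs
    rcases lt_or_eq_of_le (mono_up s hs t ht hst hvs.le) with h | h
    · exact h
    · exfalso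
      have hw : lam ≤ w t := hkey' t ht (by rw [← h, abs_of_pos hε])
      have hder : HasDerivWithinAt v (w t) (Icc l u) t := (hvd t ht).hasDerivWithinAt
      have hTsub : Ioo s t ⊆ Icc l u \ {t} := fun r hr =>
        ⟨⟨le_trans hs.1 hr.1.le, le_trans hr.2.le ht.2⟩, ne_of_lt hr.2⟩
      have hclT : t ∈ closure (Ioo s t) := by
        rw [closure_Ioo (ne_of_lt hst)]
        exact ⟨hst.le, le_refl t⟩
      obtain ⟨r, hr, hslope⟩ := exists_slope_pos hder (lt_of_lt_of_le hlam hw) hTsub hclT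
      have h1 : v r < v t := slope_pos_lt hslope hr.2
      have h2 : ε ≤ v r := mono_up s hs r ((hTsub hr).1) hr.1 hvs.le
      rw [← h] at h1
      exact absurd h2 (not_le.mpr h1)
  have mono_down' : ∀ s ∈ Icc l u, ∀ t ∈ Icc l u, s < t → v t < -ε → v s < -ε := by
    intro s hs t ht hst hvt
    rcases lt_or_eq_of_le (mono_down s hs t ht hst hvt.le) with h | h
    · exact h
    · exfalso
      have hw : lam ≤ w s := hkey' s hs (by rw [h, abs_neg, abs_of_pos hε])
      have hder : HasDerivWithinAt v (w s) (Icc l u) s := (hvd s hs).hasDerivWithinAt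
      have hTsub : Ioo s t ⊆ Icc l u \ {s} := fun r hr =>
        ⟨⟨le_trans hs.1 hr.1.le, le_trans hr.2.le ht.2⟩, ne_of_gt hr.1⟩
      have hclT : s ∈ closure (Ioo s t) := by
        rw [closure_Ioo (ne_of_lt hst)]
        exact ⟨le_refl s, hst.le⟩
      obtain ⟨r, hr, hslope⟩ := exists_slope_pos hder (lt_of_lt_of_le hlam hw) hTsub hclT
      have h1 : v s < v r := slope_pos_gt hslope hr.1
      have h2 : v r ≤ -ε := mono_down r ((hTsub hr).1) t ht hr.2 hvt.le
      rw [h] at h1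
      exact absurd h2 (not_le.mpr h1)

  intro x hx
  rcases le_or_gt (|v x|) ε with hsmall | hbig
  · -- small gradient case
    have hkey_ineq : g x - v x * x - lam/2 * (x - x)^2 ≤
        g xh - v x * xh - lam/2 * (xh - x)^2 := by
      rcases le_total xh x with hc | hc
      · -- xh ≤ x
        have hsub2 : Icc xh x ⊆ Icc l u := Icc_subset_Icc hxh.1 hx.2
        have hseg : ∀ r ∈ Icc xh x, |v r| ≤ ε := by
          intro r hr
          have hrI : r ∈ Icc l u := hsub2 hr
          rw [abs_le]
          constructor
          · by_contra h'
            push_neg at h'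
            have hrx : r ≠ x := by
              rintro rfl
              exact absurd (abs_le.mp hsmall).1 (not_le.mpr h')
            have hrx' : r < x := lt_of_le_of_ne hr.2 hrx
            rcases eq_or_lt_of_le hr.1 with hxh_r | hxh_r
            · have hder : HasDerivWithinAt g (v xh) (Icc l u) xh := (hgd xh hxh).hasDerivWithinAt
              have hvneg : v xh < 0 := by rw [hxh_r]; linarith
              have hxh_lt_x : xh < x := by rw [hxh_r]; exact hrx'
              have hTsub : Ioc xh x ⊆ Icc l u \ {xh} := fun q hq =>
                ⟨⟨le_trans hxh.1 hq.1.le, le_trans hq.2 hx.2⟩, ne_of_gt hq.1⟩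
              have hclT : xh ∈ closure (Ioc xh x) := by
                rw [closure_Ioc (ne_of_lt hxh_lt_x)]
                exact ⟨le_refl _, hxh_lt_x.le⟩
              obtain ⟨q, hq, hslope⟩ := exists_slope_neg hder hvneg hTsub hclT
              exact absurd (hmin q ((hTsub hq).1)) (not_le.mpr (slope_neg_lt hslope hq.1))
            · have hneg : ∀ q ∈ Icc xh r, v q < 0 := by
                intro q hq
                rcases eq_or_lt_of_le hq.2 with h1 | h1
                · rw [h1]; linarith
                · have := mono_down' q ⟨le_trans hxh.1 hq.1, le_trans (le_trans hq.2 hr.2) hx.2⟩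
                    r hrI h1 h'
                  linarith
              have hanti : StrictAntiOn g (Icc xh r) := by
                apply strictAntiOn_of_deriv_neg (convex_Icc xh r)
                  (hgc.mono (Icc_subset_Icc hxh.1 hrI.2))
                intro q hq
                rw [interior_Icc] at hq
                have hqIoo : q ∈ Ioo l u :=
                  ⟨lt_of_le_of_lt hxh.1 hq.1, lt_of_lt_of_le hq.2 (le_trans hrx'.le hx.2)⟩
                rw [hderiv_g q hqIoo]
                exact hneg q (Ioo_subset_Icc_self hq)
              exact absurd (hmin r hrI)
                (not_le.mpr (hanti (left_mem_Icc.mpr hxh_r.le) (right_mem_Icc.mpr hxh_r.le) hxh_r))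
          · by_contra h'
            push_neg at h'
            have hrx : r ≠ x := by
              rintro rfl
              exact absurd (abs_le.mp hsmall).2 (not_le.mpr h')
            have hrx' : r < x := lt_of_le_of_ne hr.2 hrx
            exact absurd (abs_le.mp hsmall).2 (not_le.mpr (mono_up' r hrI x hx hrx' h'))
        have layer1 : ∀ t ∈ Icc xh x, lam * (x - t) ≤ v x - v t := by
          intro t ht
          have hcont : ContinuousOn (fun r => v r - lam * r) (Icc xh x) :=
            (hvc.mono hsub2).sub (continuousOn_const.mul continuousOn_id)
          have hdiffint : DifferentiableOn ℝ (fun r => v r - lam * r) (interior (Icc xh x)) := by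
            intro q hq
            rw [interior_Icc] at hq
            have hqIoo : q ∈ Ioo l u := ⟨lt_of_le_of_lt hxh.1 hq.1, lt_of_lt_of_le hq.2 hx.2⟩
            exact ((hdiff_v q hqIoo).sub ((differentiable_id.const_mul lam) q)).differentiableWithinAt
          have hderiv_nonneg : ∀ q ∈ interior (Icc xh x),
              0 ≤ deriv (fun r => v r - lam * r) q := by
            intro q hq
            rw [interior_Icc] at hq
            have hqIoo : q ∈ Ioo l u := ⟨lt_of_le_of_lt hxh.1 hq.1, lt_of_lt_of_le hq.2 hx.2⟩
            have hd : HasDerivAt (fun r => v r - lam * r) (w q - lam) q := by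
              have h1 : HasDerivAt v (w q) q := by
                have := (hdiff_v q hqIoo).hasDerivAt
                rwa [hderiv_v q hqIoo] at this
              have h2 : HasDerivAt (fun r : ℝ => lam * r) lam q := by
                simpa using (hasDerivAt_id q).const_mul lam
              exact h1.sub h2
            rw [hd.deriv]
            have hwq : lam ≤ w q :=
              hkey' q (hsub2 (Ioo_subset_Icc_self hq)) (hseg q (Ioo_subset_Icc_self hq))
            linarith
          have hmono : MonotoneOn (fun r => v r - lam * r) (Icc xh x) :=
            monotoneOn_of_deriv_nonneg (convex_Icc xh x) hcont hdiffint hderiv_nonneg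
          have h5 : v t - lam * t ≤ v x - lam * x := hmono ht (right_mem_Icc.mpr hc) ht.2
          linarith
        have hcont2 : ContinuousOn (fun r => g r - v x * r - lam/2 * (r - x)^2) (Icc xh x) :=
          ((hgc.mono hsub2).sub (continuousOn_const.mul continuousOn_id)).sub
            (continuousOn_const.mul ((continuousOn_id.sub continuousOn_const).pow 2))
        have hdiffint2 : DifferentiableOn ℝ (fun r => g r - v x * r - lam/2 * (r - x)^2)
            (interior (Icc xh x)) := by
          intro q hq
          rw [interior_Icc] at hq
          have hqIoo : q ∈ Ioo l u := ⟨lt_of_le_of_lt hxh.1 hq.1, lt_of_lt_of_le hq.2 hx.2⟩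
          exact (((hdiff_g q hqIoo).sub ((differentiable_id.const_mul (v x)) q)).sub
            ((((differentiable_id.sub_const x).pow 2).const_mul (lam/2)) q)).differentiableWithinAt
        have hderiv_nonpos : ∀ q ∈ interior (Icc xh x),
            deriv (fun r => g r - v x * r - lam/2 * (r - x)^2) q ≤ 0 := by
          intro q hq
          rw [interior_Icc] at hq
          have hqIoo : q ∈ Ioo l u := ⟨lt_of_le_of_lt hxh.1 hq.1, lt_of_lt_of_le hq.2 hx.2⟩
          have hd : HasDerivAt (fun r => g r - v x * r - lam/2 * (r - x)^2)
              (v q - v x - lam/2 * (2 * (q - x))) q := by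
            have h1 : HasDerivAt g (v q) q := by
              have := (hdiff_g q hqIoo).hasDerivAt
              rwa [hderiv_g q hqIoo] at this
            have h2 : HasDerivAt (fun r : ℝ => v x * r) (v x) q := by
              simpa using (hasDerivAt_id q).const_mul (v x)
            have h3 : HasDerivAt (fun r : ℝ => (r - x)^2) (2 * (q - x)) q := by
              have h := ((hasDerivAt_id q).sub_const x).pow 2
              norm_num at h
              exact h
            have h4 := h3.const_mul (lam/2)
            exact (h1.sub h2).sub h4
          rw [hd.deriv]
          have := layer1 q (Ioo_subset_Icc_self hq)
          nlinarith
        have hpsi : AntitoneOn (fun r => g r - v x * r - lam/2 * (r - x)^2) (Icc xh x) :=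
          antitoneOn_of_deriv_nonpos (convex_Icc xh x) hcont2 hdiffint2 hderiv_nonpos
        have h6 : g x - v x * x - lam/2 * (x - x)^2 ≤ g xh - v x * xh - lam/2 * (xh - x)^2 :=
          hpsi (left_mem_Icc.mpr hc) (right_mem_Icc.mpr hc) hc
        exact h6
      · -- x ≤ xh
        have hsub2 : Icc x xh ⊆ Icc l u := Icc_subset_Icc hx.1 hxh.2
        have hseg : ∀ r ∈ Icc x xh, |v r| ≤ ε := by
          intro r hr
          have hrI : r ∈ Icc l u := hsub2 hr
          rw [abs_le]
          constructor
          · by_contra h'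
            push_neg at h'
            have hrx : x ≠ r := by
              rintro rfl
              exact absurd (abs_le.mp hsmall).1 (not_le.mpr h')
            have hrx' : x < r := lt_of_le_of_ne hr.1 hrx
            have := mono_down' x hx r hrI hrx' h'
            exact absurd (abs_le.mp hsmall).1 (not_le.mpr this)
          · by_contra h'
            push_neg at h'
            have hrx : x ≠ r := by
              rintro rfl
              exact absurd (abs_le.mp hsmall).2 (not_le.mpr h')
            have hrx' : x < r := lt_of_le_of_ne hr.1 hrx
            rcases eq_or_lt_of_le hr.2 with hr_xh | hr_xh
            · have hder : HasDerivWithinAt g (v xh) (Icc l u) xh := (hgd xh hxh).hasDerivWithinAt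
              have hvpos : 0 < v xh := by rw [← hr_xh]; linarith
              have hx_lt_xh : x < xh := by rw [← hr_xh]; exact hrx'
              have hTsub : Ico x xh ⊆ Icc l u \ {xh} := fun q hq =>
                ⟨⟨le_trans hx.1 hq.1, le_trans hq.2.le hxh.2⟩, ne_of_lt hq.2⟩
              have hclT : xh ∈ closure (Ico x xh) := by
                rw [closure_Ico (ne_of_lt hx_lt_xh)]
                exact ⟨hx_lt_xh.le, le_refl _⟩
              obtain ⟨q, hq, hslope⟩ := exists_slope_pos hder hvpos hTsub hclT
              exact absurd (hmin q ((hTsub hq).1)) (not_le.mpr (slope_pos_lt hslope hq.2))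
            · have hpos : ∀ q ∈ Icc r xh, 0 < v q := by
                intro q hq
                rcases eq_or_lt_of_le hq.1 with h1 | h1
                · rw [← h1]; linarith
                · have := mono_up' r hrI q
                    ⟨le_trans hx.1 (le_trans hr.1 hq.1), le_trans hq.2 hxh.2⟩ h1 h'
                  linarith
              have hmono_g : StrictMonoOn g (Icc r xh) := by
                apply strictMonoOn_of_deriv_pos (convex_Icc r xh)
                  (hgc.mono (Icc_subset_Icc hrI.1 hxh.2))
                intro q hq
                rw [interior_Icc] at hq
                have hqIoo : q ∈ Ioo l u :=
                  ⟨lt_of_le_of_lt hrI.1 hq.1, lt_of_lt_of_le hq.2 hxh.2⟩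
                rw [hderiv_g q hqIoo]
                exact hpos q (Ioo_subset_Icc_self hq)
              exact absurd (hmin r hrI)
                (not_le.mpr (hmono_g (left_mem_Icc.mpr hr_xh.le) (right_mem_Icc.mpr hr_xh.le) hr_xh))
        have layer1 : ∀ t ∈ Icc x xh, lam * (t - x) ≤ v t - v x := by
          intro t ht
          have hcont : ContinuousOn (fun r => v r - lam * r) (Icc x xh) :=
            (hvc.mono hsub2).sub (continuousOn_const.mul continuousOn_id)
          have hdiffint : DifferentiableOn ℝ (fun r => v r - lam * r) (interior (Icc x xh)) := by
            intro q hq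
            rw [interior_Icc] at hq
            have hqIoo : q ∈ Ioo l u := ⟨lt_of_le_of_lt hx.1 hq.1, lt_of_lt_of_le hq.2 hxh.2⟩
            exact ((hdiff_v q hqIoo).sub ((differentiable_id.const_mul lam) q)).differentiableWithinAt
          have hderiv_nonneg : ∀ q ∈ interior (Icc x xh),
              0 ≤ deriv (fun r => v r - lam * r) q := by
            intro q hq
            rw [interior_Icc] at hq
            have hqIoo : q ∈ Ioo l u := ⟨lt_of_le_of_lt hx.1 hq.1, lt_of_lt_of_le hq.2 hxh.2⟩
            have hd : HasDerivAt (fun r => v r - lam * r) (w q - lam) q := by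
              have h1 : HasDerivAt v (w q) q := by
                have := (hdiff_v q hqIoo).hasDerivAt
                rwa [hderiv_v q hqIoo] at this
              have h2 : HasDerivAt (fun r : ℝ => lam * r) lam q := by
                simpa using (hasDerivAt_id q).const_mul lam
              exact h1.sub h2
            rw [hd.deriv]
            have hwq : lam ≤ w q :=
              hkey' q (hsub2 (Ioo_subset_Icc_self hq)) (hseg q (Ioo_subset_Icc_self hq))
            linarith
          have hmono : MonotoneOn (fun r => v r - lam * r) (Icc x xh) :=
            monotoneOn_of_deriv_nonneg (convex_Icc x xh) hcont hdiffint hderiv_nonneg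
          have h5 : v x - lam * x ≤ v t - lam * t := hmono (left_mem_Icc.mpr hc) ht ht.1
          linarith
        have hcont2 : ContinuousOn (fun r => g r - v x * r - lam/2 * (r - x)^2) (Icc x xh) :=
          ((hgc.mono hsub2).sub (continuousOn_const.mul continuousOn_id)).sub
            (continuousOn_const.mul ((continuousOn_id.sub continuousOn_const).pow 2))
        have hdiffint2 : DifferentiableOn ℝ (fun r => g r - v x * r - lam/2 * (r - x)^2)
            (interior (Icc x xh)) := by
          intro q hq
          rw [interior_Icc] at hq
          have hqIoo : q ∈ Ioo l u := ⟨lt_of_le_of_lt hx.1 hq.1, lt_of_lt_of_le hq.2 hxh.2⟩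
          exact (((hdiff_g q hqIoo).sub ((differentiable_id.const_mul (v x)) q)).sub
            ((((differentiable_id.sub_const x).pow 2).const_mul (lam/2)) q)).differentiableWithinAt
        have hderiv_nonneg2 : ∀ q ∈ interior (Icc x xh),
            0 ≤ deriv (fun r => g r - v x * r - lam/2 * (r - x)^2) q := by
          intro q hq
          rw [interior_Icc] at hq
          have hqIoo : q ∈ Ioo l u := ⟨lt_of_le_of_lt hx.1 hq.1, lt_of_lt_of_le hq.2 hxh.2⟩
          have hd : HasDerivAt (fun r => g r - v x * r - lam/2 * (r - x)^2)
              (v q - v x - lam/2 * (2 * (q - x))) q := by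
            have h1 : HasDerivAt g (v q) q := by
              have := (hdiff_g q hqIoo).hasDerivAt
              rwa [hderiv_g q hqIoo] at this
            have h2 : HasDerivAt (fun r : ℝ => v x * r) (v x) q := by
              simpa using (hasDerivAt_id q).const_mul (v x)
            have h3 : HasDerivAt (fun r : ℝ => (r - x)^2) (2 * (q - x)) q := by
              have h := ((hasDerivAt_id q).sub_const x).pow 2
              norm_num at h
              exact h
            have h4 := h3.const_mul (lam/2)
            exact (h1.sub h2).sub h4
          rw [hd.deriv]
          have := layer1 q (Ioo_subset_Icc_self hq)
          nlinarith
        have hpsi : MonotoneOn (fun r => g r - v x * r - lam/2 * (r - x)^2) (Icc x xh) :=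
          monotoneOn_of_deriv_nonneg (convex_Icc x xh) hcont2 hdiffint2 hderiv_nonneg2
        have h6 : g x - v x * x - lam/2 * (x - x)^2 ≤ g xh - v x * xh - lam/2 * (xh - x)^2 :=
          hpsi (left_mem_Icc.mpr hc) (right_mem_Icc.mpr hc) hc
        exact h6
    have h2l : (0:ℝ) < 2 * lam := by linarith
    have heq : 1/(2*lam) * (v x)^2 = (v x)^2 / (2*lam) := by ring
    have hfin : g x - g xh ≤ 1/(2*lam) * (v x)^2 := by
      rw [heq, le_div_iff₀ h2l]
      nlinarith [sq_nonneg (v x - lam * (x - xh))]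
    calc g x - g xh ≤ 1/(2*lam) * (v x)^2 := hfin
      _ ≤ max (1/(2*lam)) (2*M/ε^2) * (v x)^2 :=
        mul_le_mul_of_nonneg_right (le_max_left _ _) (sq_nonneg _)
  · -- large gradient case
    have hM0 : (0:ℝ) ≤ M := le_trans (abs_nonneg _) (hM x hx)
    have hgx : g x ≤ M := le_trans (le_abs_self _) (hM x hx)
    have hgxh : -M ≤ g xh := (abs_le.mp (hM xh hxh)).1
    have hsq : ε^2 ≤ (v x)^2 := by nlinarith [sq_abs (v x), abs_nonneg (v x)]
    have hdiv : (0:ℝ) ≤ 2*M/ε^2 := div_nonneg (by linarith) (sq_nonneg ε)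
    calc g x - g xh ≤ 2*M := by linarith
      _ = (2*M/ε^2) * ε^2 := by field_simp
      _ ≤ (2*M/ε^2) * (v x)^2 := mul_le_mul_of_nonneg_left hsq hdiv
      _ ≤ max (1/(2*lam)) (2*M/ε^2) * (v x)^2 :=
        mul_le_mul_of_nonneg_right (le_max_right _ _) (sq_nonneg _)


lemma ident_x1 {l u : ℝ} (hlu : l < u) {f : ℝ → ℝ → ℝ}
    (hf : ContDiffOn ℝ 2 (fun p : ℝ × ℝ => f p.1 p.2) (Icc l u ×ˢ Icc l u)) :
    ∀ x ∈ Icc l u, ∀ y ∈ Icc l u,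
      derivWithin (fun x' => f x' y) (Icc l u) x =
        fderivWithin ℝ (fun p : ℝ × ℝ => f p.1 p.2) (Icc l u ×ˢ Icc l u) (x, y) (1, 0) := by
  intro x hx y hy
  have hι : HasDerivWithinAt (fun t : ℝ => (t, y)) ((1:ℝ), (0:ℝ)) (Icc l u) x :=
    HasDerivWithinAt.prodMk (hasDerivWithinAt_id x _) (hasDerivWithinAt_const x _ y)
  have hmaps : MapsTo (fun t : ℝ => (t, y)) (Icc l u) (Icc l u ×ˢ Icc l u) :=
    fun t ht => mk_mem_prod ht hy
  have hmem : (x, y) ∈ Icc l u ×ˢ Icc l u := mk_mem_prod hx hy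
  have hFd : HasFDerivWithinAt (fun p : ℝ × ℝ => f p.1 p.2)
      (fderivWithin ℝ (fun p : ℝ × ℝ => f p.1 p.2) (Icc l u ×ˢ Icc l u) (x, y))
      (Icc l u ×ˢ Icc l u) (x, y) :=
    ((hf.differentiableOn two_ne_zero) _ hmem).hasFDerivWithinAt
  have hcomp := hFd.comp_hasDerivWithinAt x hι hmaps
  exact hcomp.derivWithin ((uniqueDiffOn_Icc hlu) x hx)

lemma ident_x2 {l u : ℝ} (hlu : l < u) {f : ℝ → ℝ → ℝ}
    (hf : ContDiffOn ℝ 2 (fun p : ℝ × ℝ => f p.1 p.2) (Icc l u ×ˢ Icc l u)) :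
    ∀ x ∈ Icc l u, ∀ y ∈ Icc l u,
      derivWithin (fun x' => derivWithin (fun x'' => f x'' y) (Icc l u) x') (Icc l u) x =
        fderivWithin ℝ (fderivWithin ℝ (fun p : ℝ × ℝ => f p.1 p.2) (Icc l u ×ˢ Icc l u))
          (Icc l u ×ˢ Icc l u) (x, y) (1, 0) (1, 0) := by
  intro x hx y hy
  have hS : UniqueDiffOn ℝ (Icc l u ×ˢ Icc l u) :=
    (uniqueDiffOn_Icc hlu).prod (uniqueDiffOn_Icc hlu)
  have hι : HasDerivWithinAt (fun t : ℝ => (t, y)) ((1:ℝ), (0:ℝ)) (Icc l u) x :=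
    HasDerivWithinAt.prodMk (hasDerivWithinAt_id x _) (hasDerivWithinAt_const x _ y)
  have hmaps : MapsTo (fun t : ℝ => (t, y)) (Icc l u) (Icc l u ×ˢ Icc l u) :=
    fun t ht => mk_mem_prod ht hy
  have hmem : (x, y) ∈ Icc l u ×ˢ Icc l u := mk_mem_prod hx hy
  have hFD1 : ContDiffOn ℝ 1 (fderivWithin ℝ (fun p : ℝ × ℝ => f p.1 p.2) (Icc l u ×ˢ Icc l u))
      (Icc l u ×ˢ Icc l u) := hf.fderivWithin hS (by norm_num)
  have hEq : EqOn (fun x' => derivWithin (fun x'' => f x'' y) (Icc l u) x')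
      (fun x' => fderivWithin ℝ (fun p : ℝ × ℝ => f p.1 p.2) (Icc l u ×ˢ Icc l u) (x', y) (1, 0))
      (Icc l u) := fun t ht => ident_x1 hlu hf t ht y hy
  rw [derivWithin_congr hEq (ident_x1 hlu hf x hx y hy)]
  have hFDd : HasFDerivWithinAt (fderivWithin ℝ (fun p : ℝ × ℝ => f p.1 p.2) (Icc l u ×ˢ Icc l u))
      (fderivWithin ℝ (fderivWithin ℝ (fun p : ℝ × ℝ => f p.1 p.2) (Icc l u ×ˢ Icc l u))
        (Icc l u ×ˢ Icc l u) (x, y)) (Icc l u ×ˢ Icc l u) (x, y) :=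
    ((hFD1.differentiableOn one_ne_zero) _ hmem).hasFDerivWithinAt
  have hcomp2 := hFDd.comp_hasDerivWithinAt x hι hmaps
  have happ := hcomp2.clm_apply (hasDerivWithinAt_const x (Icc l u) (((1:ℝ), (0:ℝ)) : ℝ × ℝ))
  simp only [map_zero, add_zero] at happ
  exact happ.derivWithin ((uniqueDiffOn_Icc hlu) x hx)

lemma ident_y1 {l u : ℝ} (hlu : l < u) {f : ℝ → ℝ → ℝ}
    (hf : ContDiffOn ℝ 2 (fun p : ℝ × ℝ => f p.1 p.2) (Icc l u ×ˢ Icc l u)) :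
    ∀ x ∈ Icc l u, ∀ y ∈ Icc l u,
      derivWithin (fun y' => f x y') (Icc l u) y =
        fderivWithin ℝ (fun p : ℝ × ℝ => f p.1 p.2) (Icc l u ×ˢ Icc l u) (x, y) (0, 1) := by
  intro x hx y hy
  have hι : HasDerivWithinAt (fun t : ℝ => (x, t)) ((0:ℝ), (1:ℝ)) (Icc l u) y :=
    HasDerivWithinAt.prodMk (hasDerivWithinAt_const y _ x) (hasDerivWithinAt_id y _)
  have hmaps : MapsTo (fun t : ℝ => (x, t)) (Icc l u) (Icc l u ×ˢ Icc l u) :=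
    fun t ht => mk_mem_prod hx ht
  have hmem : (x, y) ∈ Icc l u ×ˢ Icc l u := mk_mem_prod hx hy
  have hFd : HasFDerivWithinAt (fun p : ℝ × ℝ => f p.1 p.2)
      (fderivWithin ℝ (fun p : ℝ × ℝ => f p.1 p.2) (Icc l u ×ˢ Icc l u) (x, y))
      (Icc l u ×ˢ Icc l u) (x, y) :=
    ((hf.differentiableOn two_ne_zero) _ hmem).hasFDerivWithinAt
  have hcomp := hFd.comp_hasDerivWithinAt y hι hmaps
  exact hcomp.derivWithin ((uniqueDiffOn_Icc hlu) y hy)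

lemma ident_y2 {l u : ℝ} (hlu : l < u) {f : ℝ → ℝ → ℝ}
    (hf : ContDiffOn ℝ 2 (fun p : ℝ × ℝ => f p.1 p.2) (Icc l u ×ˢ Icc l u)) :
    ∀ x ∈ Icc l u, ∀ y ∈ Icc l u,
      derivWithin (fun y' => derivWithin (fun y'' => f x y'') (Icc l u) y') (Icc l u) y =
        fderivWithin ℝ (fderivWithin ℝ (fun p : ℝ × ℝ => f p.1 p.2) (Icc l u ×ˢ Icc l u))
          (Icc l u ×ˢ Icc l u) (x, y) (0, 1) (0, 1) := by
  intro x hx y hy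
  have hS : UniqueDiffOn ℝ (Icc l u ×ˢ Icc l u) :=
    (uniqueDiffOn_Icc hlu).prod (uniqueDiffOn_Icc hlu)
  have hι : HasDerivWithinAt (fun t : ℝ => (x, t)) ((0:ℝ), (1:ℝ)) (Icc l u) y :=
    HasDerivWithinAt.prodMk (hasDerivWithinAt_const y _ x) (hasDerivWithinAt_id y _)
  have hmaps : MapsTo (fun t : ℝ => (x, t)) (Icc l u) (Icc l u ×ˢ Icc l u) :=
    fun t ht => mk_mem_prod hx ht
  have hmem : (x, y) ∈ Icc l u ×ˢ Icc l u := mk_mem_prod hx hy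
  have hFD1 : ContDiffOn ℝ 1 (fderivWithin ℝ (fun p : ℝ × ℝ => f p.1 p.2) (Icc l u ×ˢ Icc l u))
      (Icc l u ×ˢ Icc l u) := hf.fderivWithin hS (by norm_num)
  have hEq : EqOn (fun y' => derivWithin (fun y'' => f x y'') (Icc l u) y')
      (fun y' => fderivWithin ℝ (fun p : ℝ × ℝ => f p.1 p.2) (Icc l u ×ˢ Icc l u) (x, y') (0, 1))
      (Icc l u) := fun t ht => ident_y1 hlu hf x hx t ht
  rw [derivWithin_congr hEq (ident_y1 hlu hf x hx y hy)]
  have hFDd : HasFDerivWithinAt (fderivWithin ℝ (fun p : ℝ × ℝ => f p.1 p.2) (Icc l u ×ˢ Icc l u))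
      (fderivWithin ℝ (fderivWithin ℝ (fun p : ℝ × ℝ => f p.1 p.2) (Icc l u ×ˢ Icc l u))
        (Icc l u ×ˢ Icc l u) (x, y)) (Icc l u ×ˢ Icc l u) (x, y) :=
    ((hFD1.differentiableOn one_ne_zero) _ hmem).hasFDerivWithinAt
  have hcomp2 := hFDd.comp_hasDerivWithinAt y hι hmaps
  have happ := hcomp2.clm_apply (hasDerivWithinAt_const y (Icc l u) (((0:ℝ), (1:ℝ)) : ℝ × ℝ))
  simp only [map_zero, add_zero] at happ
  exact happ.derivWithin ((uniqueDiffOn_Icc hlu) y hy)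


/-- Criterion for the two-sided PL condition: if `f` is `C²` on `I² = [l,u]²` and at every
point of `I²` one has `∂ₓf = 0 ⟹ ∂ₓ²f > 0` and `∂_y f = 0 ⟹ ∂_y²f < 0`, then `f`
satisfies the two-sided PL condition on `I²` with some constant `C`. -/
theorem statement_5 (l u : ℝ) (f : ℝ → ℝ → ℝ)
    (hf : ContDiffOn ℝ 2 (fun p : ℝ × ℝ => f p.1 p.2) (Icc l u ×ˢ Icc l u))
    (h1 : ∀ x ∈ Icc l u, ∀ y ∈ Icc l u,
      derivWithin (fun x' => f x' y) (Icc l u) x = 0 →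
      0 < derivWithin (fun x' => derivWithin (fun x'' => f x'' y) (Icc l u) x') (Icc l u) x)
    (h2 : ∀ x ∈ Icc l u, ∀ y ∈ Icc l u,
      derivWithin (fun y' => f x y') (Icc l u) y = 0 →
      derivWithin (fun y' => derivWithin (fun y'' => f x y'') (Icc l u) y') (Icc l u) y < 0) :
    ∃ C : ℝ, ∀ x ∈ Icc l u, ∀ y ∈ Icc l u,
      f x y - sInf ((fun x' => f x' y) '' Icc l u) ≤
        C * (derivWithin (fun x' => f x' y) (Icc l u) x) ^ 2 ∧
      sSup ((fun y' => f x y') '' Icc l u) - f x y ≤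
        C * (derivWithin (fun y' => f x y') (Icc l u) y) ^ 2 := by
  rcases lt_trichotomy l u with hlu | heq | hgt
  · -- main case l < u
    have hS : UniqueDiffOn ℝ (Icc l u ×ˢ Icc l u) :=
      (uniqueDiffOn_Icc hlu).prod (uniqueDiffOn_Icc hlu)
    have hScpt : IsCompact (Icc l u ×ˢ Icc l u) := isCompact_Icc.prod isCompact_Icc
    have hSne : (Icc l u ×ˢ Icc l u).Nonempty :=
      ⟨(l, l), mk_mem_prod (left_mem_Icc.mpr hlu.le) (left_mem_Icc.mpr hlu.le)⟩
    have hFc : ContinuousOn (fun p : ℝ × ℝ => f p.1 p.2) (Icc l u ×ˢ Icc l u) := hf.continuousOn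
    obtain ⟨zM, hzM, hzMmax⟩ := hScpt.exists_isMaxOn hSne hFc.abs
    set M := |f zM.1 zM.2| with hM_def
    have hMb : ∀ z ∈ Icc l u ×ˢ Icc l u, |f z.1 z.2| ≤ M :=
      fun z hz => isMaxOn_iff.mp hzMmax z hz
    have hFD1 : ContDiffOn ℝ 1
        (fderivWithin ℝ (fun p : ℝ × ℝ => f p.1 p.2) (Icc l u ×ˢ Icc l u))
        (Icc l u ×ˢ Icc l u) := hf.fderivWithin hS (by norm_num)
    have hFD2c : ContinuousOn
        (fderivWithin ℝ (fderivWithin ℝ (fun p : ℝ × ℝ => f p.1 p.2) (Icc l u ×ˢ Icc l u))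
          (Icc l u ×ˢ Icc l u)) (Icc l u ×ˢ Icc l u) :=
      (hFD1.fderivWithin (m := 0) hS (by norm_num)).continuousOn
    -- x-direction compactness constants
    have hGxc : ContinuousOn
        (fun z => fderivWithin ℝ (fun p : ℝ × ℝ => f p.1 p.2) (Icc l u ×ˢ Icc l u) z
          ((1:ℝ), (0:ℝ))) (Icc l u ×ˢ Icc l u) := hFD1.continuousOn.clm_apply continuousOn_const
    have hHxc : ContinuousOn
        (fun z => fderivWithin ℝ (fderivWithin ℝ (fun p : ℝ × ℝ => f p.1 p.2)
          (Icc l u ×ˢ Icc l u)) (Icc l u ×ˢ Icc l u) z ((1:ℝ), (0:ℝ)) ((1:ℝ), (0:ℝ)))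
        (Icc l u ×ˢ Icc l u) := (hFD2c.clm_apply continuousOn_const).clm_apply continuousOn_const
    obtain ⟨zx, hzx, hzxmin⟩ := hScpt.exists_isMinOn hSne (hGxc.abs.sup hHxc)
    set dx := max |fderivWithin ℝ (fun p : ℝ × ℝ => f p.1 p.2) (Icc l u ×ˢ Icc l u) zx
        ((1:ℝ), (0:ℝ))|
      (fderivWithin ℝ (fderivWithin ℝ (fun p : ℝ × ℝ => f p.1 p.2) (Icc l u ×ˢ Icc l u))
        (Icc l u ×ˢ Icc l u) zx ((1:ℝ), (0:ℝ)) ((1:ℝ), (0:ℝ))) with hdx_def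
    have hdx : 0 < dx := by
      rcases eq_or_ne (fderivWithin ℝ (fun p : ℝ × ℝ => f p.1 p.2) (Icc l u ×ˢ Icc l u) zx
          ((1:ℝ), (0:ℝ))) 0 with h0 | h0
      · have hpos := h1 zx.1 hzx.1 zx.2 hzx.2 (by
          rw [ident_x1 hlu hf zx.1 hzx.1 zx.2 hzx.2, Prod.mk.eta]
          exact h0)
        rw [ident_x2 hlu hf zx.1 hzx.1 zx.2 hzx.2, Prod.mk.eta] at hpos
        exact lt_of_lt_of_le hpos (le_max_right _ _)
      · exact lt_of_lt_of_le (abs_pos.mpr h0) (le_max_left _ _)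
    have hx_prop : ∀ z ∈ Icc l u ×ˢ Icc l u,
        |fderivWithin ℝ (fun p : ℝ × ℝ => f p.1 p.2) (Icc l u ×ˢ Icc l u) z ((1:ℝ), (0:ℝ))|
          ≤ dx/2 →
        dx ≤ fderivWithin ℝ (fderivWithin ℝ (fun p : ℝ × ℝ => f p.1 p.2) (Icc l u ×ˢ Icc l u))
          (Icc l u ×ˢ Icc l u) z ((1:ℝ), (0:ℝ)) ((1:ℝ), (0:ℝ)) := by
      intro z hz hle
      have hmin := isMinOn_iff.mp hzxmin z hz
      rcases le_max_iff.mp hmin with h | h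
      · linarith
      · exact h
    -- y-direction compactness constants
    have hGyc : ContinuousOn
        (fun z => fderivWithin ℝ (fun p : ℝ × ℝ => f p.1 p.2) (Icc l u ×ˢ Icc l u) z
          ((0:ℝ), (1:ℝ))) (Icc l u ×ˢ Icc l u) := hFD1.continuousOn.clm_apply continuousOn_const
    have hHyc : ContinuousOn
        (fun z => -(fderivWithin ℝ (fderivWithin ℝ (fun p : ℝ × ℝ => f p.1 p.2)
          (Icc l u ×ˢ Icc l u)) (Icc l u ×ˢ Icc l u) z ((0:ℝ), (1:ℝ)) ((0:ℝ), (1:ℝ))))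
        (Icc l u ×ˢ Icc l u) :=
      ((hFD2c.clm_apply continuousOn_const).clm_apply continuousOn_const).neg
    obtain ⟨zy, hzy, hzymin⟩ := hScpt.exists_isMinOn hSne (hGyc.abs.sup hHyc)
    set dy := max |fderivWithin ℝ (fun p : ℝ × ℝ => f p.1 p.2) (Icc l u ×ˢ Icc l u) zy
        ((0:ℝ), (1:ℝ))|
      (-(fderivWithin ℝ (fderivWithin ℝ (fun p : ℝ × ℝ => f p.1 p.2) (Icc l u ×ˢ Icc l u))
        (Icc l u ×ˢ Icc l u) zy ((0:ℝ), (1:ℝ)) ((0:ℝ), (1:ℝ)))) with hdy_def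
    have hdy : 0 < dy := by
      rcases eq_or_ne (fderivWithin ℝ (fun p : ℝ × ℝ => f p.1 p.2) (Icc l u ×ˢ Icc l u) zy
          ((0:ℝ), (1:ℝ))) 0 with h0 | h0
      · have hneg := h2 zy.1 hzy.1 zy.2 hzy.2 (by
          rw [ident_y1 hlu hf zy.1 hzy.1 zy.2 hzy.2, Prod.mk.eta]
          exact h0)
        rw [ident_y2 hlu hf zy.1 hzy.1 zy.2 hzy.2, Prod.mk.eta] at hneg
        exact lt_of_lt_of_le (neg_pos.mpr hneg) (le_max_right _ _)
      · exact lt_of_lt_of_le (abs_pos.mpr h0) (le_max_left _ _)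
    have hy_prop : ∀ z ∈ Icc l u ×ˢ Icc l u,
        |fderivWithin ℝ (fun p : ℝ × ℝ => f p.1 p.2) (Icc l u ×ˢ Icc l u) z ((0:ℝ), (1:ℝ))|
          ≤ dy/2 →
        dy ≤ -(fderivWithin ℝ (fderivWithin ℝ (fun p : ℝ × ℝ => f p.1 p.2) (Icc l u ×ˢ Icc l u))
          (Icc l u ×ˢ Icc l u) z ((0:ℝ), (1:ℝ)) ((0:ℝ), (1:ℝ))) := by
      intro z hz hle
      have hmin := isMinOn_iff.mp hzymin z hz
      rcases le_max_iff.mp hmin with h | h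
      · linarith
      · exact h
    set Cx := max (1/(2*dx)) (2*M/(dx/2)^2) with hCx_def
    set Cy := max (1/(2*dy)) (2*M/(dy/2)^2) with hCy_def
    refine ⟨max Cx Cy, ?_⟩
    intro x hx y hy
    constructor
    · -- x-part
      have hg : ContDiffOn ℝ 2 (fun x' => f x' y) (Icc l u) := by
        have hι : ContDiffOn ℝ 2 (fun t : ℝ => (t, y)) (Icc l u) :=
          (contDiff_id.prodMk contDiff_const).contDiffOn
        exact hf.comp hι (fun t ht => mk_mem_prod ht hy)
      obtain ⟨xm, hxm, hxmmin⟩ :=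
        isCompact_Icc.exists_isMinOn ⟨l, left_mem_Icc.mpr hlu.le⟩ hg.continuousOn
      have hmin' : ∀ t ∈ Icc l u, f xm y ≤ f t y := fun t ht => isMinOn_iff.mp hxmmin t ht
      have hinf : sInf ((fun x' => f x' y) '' Icc l u) = f xm y :=
        IsLeast.csInf_eq ⟨⟨xm, hxm, rfl⟩, by rintro a ⟨t, ht, rfl⟩; exact hmin' t ht⟩
      have hkey : ∀ t ∈ Icc l u, |derivWithin (fun x' => f x' y) (Icc l u) t| ≤ dx/2 →
          dx ≤ derivWithin (derivWithin (fun x' => f x' y) (Icc l u)) (Icc l u) t := by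
        intro t ht hle
        have e1 := ident_x1 hlu hf t ht y hy
        have e2' : derivWithin (derivWithin (fun x' => f x' y) (Icc l u)) (Icc l u) t =
            fderivWithin ℝ (fderivWithin ℝ (fun p : ℝ × ℝ => f p.1 p.2) (Icc l u ×ˢ Icc l u))
              (Icc l u ×ˢ Icc l u) (t, y) ((1:ℝ), (0:ℝ)) ((1:ℝ), (0:ℝ)) :=
          ident_x2 hlu hf t ht y hy
        rw [e2']
        exact hx_prop (t, y) (mk_mem_prod ht hy) (by rw [← e1]; exact hle)
      have hres := key1d hlu (half_pos hdx) hdx hg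
        (fun t ht => hMb (t, y) (mk_mem_prod ht hy)) hkey hxm hmin' x hx
      rw [hinf]
      calc f x y - f xm y ≤ Cx * (derivWithin (fun x' => f x' y) (Icc l u) x)^2 := hres
        _ ≤ max Cx Cy * (derivWithin (fun x' => f x' y) (Icc l u) x)^2 :=
          mul_le_mul_of_nonneg_right (le_max_left _ _) (sq_nonneg _)
    · -- y-part
      have hgslice : ContDiffOn ℝ 2 (fun y' => f x y') (Icc l u) := by
        have hι : ContDiffOn ℝ 2 (fun t : ℝ => (x, t)) (Icc l u) :=
          (contDiff_const.prodMk contDiff_id).contDiffOn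
        exact hf.comp hι (fun t ht => mk_mem_prod hx ht)
      have hg : ContDiffOn ℝ 2 (fun y' => -(f x y')) (Icc l u) := hgslice.neg
      obtain ⟨ym, hym, hymmax⟩ :=
        isCompact_Icc.exists_isMaxOn ⟨l, left_mem_Icc.mpr hlu.le⟩ hgslice.continuousOn
      have hmax' : ∀ t ∈ Icc l u, f x t ≤ f x ym := fun t ht => isMaxOn_iff.mp hymmax t ht
      have hsup : sSup ((fun y' => f x y') '' Icc l u) = f x ym :=
        IsGreatest.csSup_eq ⟨⟨ym, hym, rfl⟩, by rintro a ⟨t, ht, rfl⟩; exact hmax' t ht⟩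
      have hmin' : ∀ t ∈ Icc l u, -(f x ym) ≤ -(f x t) := fun t ht => neg_le_neg (hmax' t ht)
      have hnegd : ∀ t ∈ Icc l u, derivWithin (fun y' => -(f x y')) (Icc l u) t =
          -(derivWithin (fun y' => f x y') (Icc l u) t) :=
        fun t ht => derivWithin.neg (f := fun y' => f x y')
      have hkey : ∀ t ∈ Icc l u, |derivWithin (fun y' => -(f x y')) (Icc l u) t| ≤ dy/2 →
          dy ≤ derivWithin (derivWithin (fun y' => -(f x y')) (Icc l u)) (Icc l u) t := by
        intro t ht hle
        rw [hnegd t ht, abs_neg] at hle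
        have e2nd : derivWithin (derivWithin (fun y' => -(f x y')) (Icc l u)) (Icc l u) t =
            -(derivWithin (fun y' => derivWithin (fun y'' => f x y'') (Icc l u) y')
              (Icc l u) t) := by
          have hEq : EqOn (derivWithin (fun y' => -(f x y')) (Icc l u))
              (fun y' => -(derivWithin (fun y'' => f x y'') (Icc l u) y')) (Icc l u) :=
            fun q hq => hnegd q hq
          rw [derivWithin_congr hEq (hnegd t ht)]
          exact derivWithin.neg (f := fun y' => derivWithin (fun y'' => f x y'') (Icc l u) y')
        rw [e2nd]
        have e1 := ident_y1 hlu hf x hx t ht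
        have e2 := ident_y2 hlu hf x hx t ht
        rw [e2]
        exact hy_prop (x, t) (mk_mem_prod hx ht) (by rw [← e1]; exact hle)
      have hM' : ∀ t ∈ Icc l u, |(-(f x t))| ≤ M := by
        intro t ht
        rw [abs_neg]
        exact hMb (x, t) (mk_mem_prod hx ht)
      have hres := key1d hlu (half_pos hdy) hdy hg hM' hkey hym hmin' y hy
      have hd2 : (derivWithin (fun y' => -(f x y')) (Icc l u) y)^2 =
          (derivWithin (fun y' => f x y') (Icc l u) y)^2 := by
        rw [hnegd y hy]; ring
      rw [hd2] at hres
      rw [hsup]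
      calc f x ym - f x y = -(f x y) - -(f x ym) := by ring
        _ ≤ Cy * (derivWithin (fun y' => f x y') (Icc l u) y)^2 := hres
        _ ≤ max Cx Cy * (derivWithin (fun y' => f x y') (Icc l u) y)^2 :=
          mul_le_mul_of_nonneg_right (le_max_right _ _) (sq_nonneg _)
  · -- degenerate case l = u
    refine ⟨0, ?_⟩
    rw [heq]
    intro x hx y hy
    rw [Icc_self] at hx hy
    rw [show x = u from hx, show y = u from hy]
    constructor
    · have himg : (fun x' => f x' u) '' Icc u u = {f u u} := by
        rw [Icc_self, image_singleton]
      rw [himg, csInf_singleton]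
      simp
    · have himg : (fun y' => f u y') '' Icc u u = {f u u} := by
        rw [Icc_self, image_singleton]
      rw [himg, csSup_singleton]
      simp
  · -- degenerate case u < l
    refine ⟨0, ?_⟩
    intro x hx
    rw [Icc_eq_empty (not_le.mpr hgt)] at hx
    exact absurd hx (notMem_empty x)
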